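/- Let {E_i}_{i=1}^n be a POVM on ℂ^d and define its disturbance D = Σ_{l,m=1}^n (tr(√E_l √E_m))² − 2 Σ_{l=1}^n (tr √E_l)² + d². Then D ≥ 0, and D = 0 if and only if every effect E_i is a nonnegative real scalar multiple of the identity matrix. -/

import Mathlib

open Matrix BigOperators
open scoped ComplexOrder

/-- The positive semidefinite square root of a positive semidefinite matrix
(the definition `Matrix.PosSemidef.sqrt` of the older Mathlib, since removed). -/
noncomputable def Matrix.PosSemidef.sqrt {n : Type*} [Fintype n] [DecidableEq n] {𝕜 : Type*}
    [RCLike 𝕜] {A : Matrix n n 𝕜} (hA : A.PosSemidef) : Matrix n n 𝕜 :=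
  hA.1.eigenvectorUnitary.1 * diagonal ((↑) ∘ (·.sqrt) ∘ hA.1.eigenvalues) *
  (star hA.1.eigenvectorUnitary : Matrix n n 𝕜)

lemma psd_spectral {d : ℕ} {A : Matrix (Fin d) (Fin d) ℂ} (hA : A.PosSemidef) :
    A = (hA.1.eigenvectorUnitary : Matrix (Fin d) (Fin d) ℂ) *
      diagonal (RCLike.ofReal ∘ hA.1.eigenvalues) *
      (star hA.1.eigenvectorUnitary : Matrix (Fin d) (Fin d) ℂ) := by
  conv_lhs => rw [hA.1.spectral_theorem]
  simp [Unitary.conjStarAlgAut_apply]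

lemma psd_sqrt_posSemidef {d : ℕ} {A : Matrix (Fin d) (Fin d) ℂ} (hA : A.PosSemidef) :
    hA.sqrt.PosSemidef := by
  unfold Matrix.PosSemidef.sqrt
  rw [star_eq_conjTranspose]
  apply PosSemidef.mul_mul_conjTranspose_same
  exact PosSemidef.diagonal fun i => by
    simp only [Function.comp_apply]
    exact Complex.zero_le_real.mpr (Real.sqrt_nonneg _)

lemma psd_sqrt_mul_self {d : ℕ} {A : Matrix (Fin d) (Fin d) ℂ} (hA : A.PosSemidef) :
    hA.sqrt * hA.sqrt = A := by
  unfold Matrix.PosSemidef.sqrt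
  have hU : (star hA.1.eigenvectorUnitary : Matrix (Fin d) (Fin d) ℂ) *
      (hA.1.eigenvectorUnitary : Matrix (Fin d) (Fin d) ℂ) = 1 := by simp
  conv_rhs => rw [psd_spectral hA]
  calc _ = (hA.1.eigenvectorUnitary : Matrix (Fin d) (Fin d) ℂ) *
        (diagonal (RCLike.ofReal ∘ (·.sqrt) ∘ hA.1.eigenvalues) *
          ((star hA.1.eigenvectorUnitary : Matrix (Fin d) (Fin d) ℂ) *
            (hA.1.eigenvectorUnitary : Matrix (Fin d) (Fin d) ℂ)) *
          diagonal (RCLike.ofReal ∘ (·.sqrt) ∘ hA.1.eigenvalues)) *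
        (star hA.1.eigenvectorUnitary : Matrix (Fin d) (Fin d) ℂ) := by
          simp only [Matrix.mul_assoc]
    _ = _ := by
      rw [hU, Matrix.mul_one, diagonal_mul_diagonal]
      refine congrArg (fun M => _ * M * _) (congrArg diagonal (funext fun i => ?_))
      simp only [Function.comp_apply]
      rw [← RCLike.ofReal_mul, Real.mul_self_sqrt (hA.eigenvalues_nonneg i)]

lemma psd_sqrt_of_eq_smul_one {d : ℕ} {A : Matrix (Fin d) (Fin d) ℂ} (hA : A.PosSemidef)
    (c : ℝ) (h : A = (c : ℂ) • (1 : Matrix (Fin d) (Fin d) ℂ)) :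
    hA.sqrt = ((Real.sqrt c : ℝ) : ℂ) • (1 : Matrix (Fin d) (Fin d) ℂ) := by
  have hU : (star hA.1.eigenvectorUnitary : Matrix (Fin d) (Fin d) ℂ) *
      (hA.1.eigenvectorUnitary : Matrix (Fin d) (Fin d) ℂ) = 1 := by simp
  have hU' : (hA.1.eigenvectorUnitary : Matrix (Fin d) (Fin d) ℂ) *
      (star hA.1.eigenvectorUnitary : Matrix (Fin d) (Fin d) ℂ) = 1 := by simp
  have hD : diagonal (RCLike.ofReal ∘ hA.1.eigenvalues) = (c : ℂ) • (1 : Matrix (Fin d) (Fin d) ℂ) := by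
    calc diagonal (RCLike.ofReal ∘ hA.1.eigenvalues)
        = ((star hA.1.eigenvectorUnitary : Matrix (Fin d) (Fin d) ℂ) *
            (hA.1.eigenvectorUnitary : Matrix (Fin d) (Fin d) ℂ)) *
          diagonal (RCLike.ofReal ∘ hA.1.eigenvalues) *
          ((star hA.1.eigenvectorUnitary : Matrix (Fin d) (Fin d) ℂ) *
            (hA.1.eigenvectorUnitary : Matrix (Fin d) (Fin d) ℂ)) := by
          rw [hU, Matrix.one_mul, Matrix.mul_one]
      _ = (star hA.1.eigenvectorUnitary : Matrix (Fin d) (Fin d) ℂ) *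
          ((hA.1.eigenvectorUnitary : Matrix (Fin d) (Fin d) ℂ) *
          diagonal (RCLike.ofReal ∘ hA.1.eigenvalues) *
          (star hA.1.eigenvectorUnitary : Matrix (Fin d) (Fin d) ℂ)) *
            (hA.1.eigenvectorUnitary : Matrix (Fin d) (Fin d) ℂ) := by
          simp only [Matrix.mul_assoc]
      _ = (star hA.1.eigenvectorUnitary : Matrix (Fin d) (Fin d) ℂ) * A *
            (hA.1.eigenvectorUnitary : Matrix (Fin d) (Fin d) ℂ) := by
          rw [← psd_spectral hA]
      _ = (star hA.1.eigenvectorUnitary : Matrix (Fin d) (Fin d) ℂ) *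
            ((c : ℂ) • (1 : Matrix (Fin d) (Fin d) ℂ)) *
            (hA.1.eigenvectorUnitary : Matrix (Fin d) (Fin d) ℂ) :=
          congrArg (fun M => _ * M * _) h
      _ = _ := by
          rw [Matrix.mul_smul, Matrix.mul_one, Matrix.smul_mul, hU]
  have hl : ∀ i, hA.1.eigenvalues i = c := by
    intro i
    have := congrFun (congrFun hD i) i
    rw [diagonal_apply_eq, Matrix.smul_apply, one_apply_eq] at this
    simpa using this
  have hS : diagonal (RCLike.ofReal ∘ (·.sqrt) ∘ hA.1.eigenvalues) =
      ((Real.sqrt c : ℝ) : ℂ) • (1 : Matrix (Fin d) (Fin d) ℂ) := by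
    rw [smul_one_eq_diagonal]
    congr 1
    ext i
    simp [hl i]
  unfold Matrix.PosSemidef.sqrt
  rw [hS, Matrix.mul_smul, Matrix.mul_one, Matrix.smul_mul, hU']


open scoped Kronecker

lemma kron_isHermitian {d : ℕ} {A B : Matrix (Fin d) (Fin d) ℂ}
    (hA : A.IsHermitian) (hB : B.IsHermitian) : (A ⊗ₖ B).IsHermitian := by
  ext ⟨i, j⟩ ⟨k, l⟩
  simp only [conjTranspose_apply, kroneckerMap_apply, star_mul']
  rw [mul_comm, hA.apply i k, hB.apply j l]
  ring

lemma trace_re_herm {d : ℕ} {A : Matrix (Fin d) (Fin d) ℂ} (hA : A.IsHermitian) :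
    ((A.trace.re : ℝ) : ℂ) = A.trace := by
  rw [← Complex.conj_eq_iff_re]
  calc (starRingEnd ℂ) A.trace = star A.trace := rfl
    _ = Aᴴ.trace := (trace_conjTranspose _).symm
    _ = A.trace := by rw [hA.eq]

lemma trace_mul_re_herm {d : ℕ} {A B : Matrix (Fin d) (Fin d) ℂ}
    (hA : A.IsHermitian) (hB : B.IsHermitian) :
    (((A * B).trace.re : ℝ) : ℂ) = (A * B).trace := by
  rw [← Complex.conj_eq_iff_re]
  calc (starRingEnd ℂ) (A * B).trace = star (A * B).trace := rfl
    _ = (A * B)ᴴ.trace := (trace_conjTranspose _).symm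
    _ = (Bᴴ * Aᴴ).trace := by rw [conjTranspose_mul]
    _ = (B * A).trace := by rw [hA.eq, hB.eq]
    _ = (A * B).trace := trace_mul_comm _ _

/-- For a POVM `{E_i}` on `ℂ^d`, the disturbance
`D = Σ_{l,m} (tr(√E_l √E_m))² − 2 Σ_l (tr √E_l)² + d²` satisfies `D ≥ 0`, with `D = 0`
iff every effect is a nonnegative real multiple of the identity. -/
theorem disturbance_nonneg_and_zero_iff_trivial
    (d n : ℕ) (E : Fin n → Matrix (Fin d) (Fin d) ℂ)
    (hE : ∀ i, (E i).PosSemidef)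
    (hsum : ∑ i, E i = 1)
    (D : ℝ)
    (hD : D = ∑ l, ∑ m, (((hE l).sqrt * (hE m).sqrt).trace.re) ^ 2
        - 2 * ∑ l, (((hE l).sqrt).trace.re) ^ 2 + (d : ℝ) ^ 2) :
    0 ≤ D ∧ (D = 0 ↔ ∀ i, ∃ c : ℝ, 0 ≤ c ∧ E i = (c : ℂ) • (1 : Matrix (Fin d) (Fin d) ℂ)) := by
  classical
  let F : Fin n → Matrix (Fin d) (Fin d) ℂ := fun l => (hE l).sqrt
  have hFps : ∀ l, (F l).PosSemidef := fun l => psd_sqrt_posSemidef (hE l)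
  have hFh : ∀ l, (F l).IsHermitian := fun l => (hFps l).1
  have hFsq : ∀ l, F l * F l = E l := fun l => psd_sqrt_mul_self (hE l)
  set S : Matrix (Fin d × Fin d) (Fin d × Fin d) ℂ := ∑ l, (F l) ⊗ₖ (F l) with hSdef
  have hSh : S.IsHermitian := by
    show Sᴴ = S
    rw [hSdef, conjTranspose_sum]
    exact Finset.sum_congr rfl fun l _ => kron_isHermitian (hFh l) (hFh l)
  set H : Matrix (Fin d × Fin d) (Fin d × Fin d) ℂ := S - 1 with hHdef
  have hHh : H.IsHermitian := hSh.sub isHermitian_one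
  -- trace computations
  have traceSS : (S * S).trace = ∑ l, ∑ m, ((F l * F m).trace) ^ 2 := by
    rw [hSdef, Finset.sum_mul_sum, trace_sum]
    refine Finset.sum_congr rfl fun l _ => ?_
    rw [trace_sum]
    refine Finset.sum_congr rfl fun m _ => ?_
    rw [← mul_kronecker_mul, trace_kronecker, sq]
  have traceS : S.trace = ∑ l, ((F l).trace) ^ 2 := by
    rw [hSdef, trace_sum]
    exact Finset.sum_congr rfl fun l _ => by rw [trace_kronecker, sq]
  have trace1 : (1 : Matrix (Fin d × Fin d) (Fin d × Fin d) ℂ).trace = (d : ℂ) ^ 2 := by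
    rw [trace_one]
    simp [Fintype.card_prod, sq]
  have hDC : (D : ℂ) = ∑ l, ∑ m, ((F l * F m).trace) ^ 2 - 2 * ∑ l, ((F l).trace) ^ 2
      + (d : ℂ) ^ 2 := by
    rw [hD]
    push_cast
    simp only [F] at hFh ⊢
    simp_rw [fun l m => trace_mul_re_herm (hFh l) (hFh m), fun l => trace_re_herm (hFh l)]
  have e1 : (H * H).trace = ∑ l, ∑ m, ((F l * F m).trace) ^ 2
      - 2 * ∑ l, ((F l).trace) ^ 2 + (d : ℂ) ^ 2 := by
    have hexp : H * H = S * S - S - S + 1 := by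
      rw [hHdef]
      noncomm_ring
    rw [hexp, trace_add, trace_sub, trace_sub, traceSS, traceS, trace1]
    ring
  have e2 : (H * H).trace = ∑ p : Fin d × Fin d, ∑ q : Fin d × Fin d,
      (Complex.normSq (H p q) : ℂ) := by
    calc (H * H).trace = ∑ p, ∑ q, H p q * H q p := by
          simp [Matrix.trace, Matrix.diag, Matrix.mul_apply]
      _ = ∑ p, ∑ q, (Complex.normSq (H p q) : ℂ) := by
          refine Finset.sum_congr rfl fun p _ => Finset.sum_congr rfl fun q _ => ?_
          rw [← hHh.apply q p, Complex.star_def, Complex.mul_conj]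
  have hDval : D = ∑ p : Fin d × Fin d, ∑ q : Fin d × Fin d, Complex.normSq (H p q) := by
    have h := hDC.trans (e1.symm.trans e2)
    exact_mod_cast h
  have hnonneg : 0 ≤ D := by
    rw [hDval]
    exact Finset.sum_nonneg fun p _ => Finset.sum_nonneg fun q _ => Complex.normSq_nonneg _
  refine ⟨hnonneg, ?_⟩
  have hz : D = 0 ↔ S = 1 := by
    constructor
    · intro h0
      rw [hDval] at h0
      have h1 := (Finset.sum_eq_zero_iff_of_nonneg
        (fun p _ => Finset.sum_nonneg fun q _ => Complex.normSq_nonneg _)).mp h0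
      have h2 : ∀ p q, Complex.normSq (H p q) = 0 := by
        intro p q
        exact (Finset.sum_eq_zero_iff_of_nonneg
          (fun q _ => Complex.normSq_nonneg _)).mp (h1 p (Finset.mem_univ p)) q
          (Finset.mem_univ q)
      have hH0 : H = 0 := by
        ext p q
        exact Complex.normSq_eq_zero.mp (h2 p q)
      have := sub_eq_zero.mp (hHdef ▸ hH0)
      exact this
    · intro h1
      rw [hDval, hHdef, h1]
      simp
  rw [hz]
  constructor
  · -- S = 1 → scalars
    intro hS1 m
    rcases isEmpty_or_nonempty (Fin d) with hd | hd
    · exact ⟨0, le_refl 0, by ext a b; exact hd.elim a⟩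
    · obtain ⟨i₀⟩ := hd
      have hentry : ∀ i j k l, (∑ m', F m' i k * F m' j l)
          = if (i, j) = (k, l) then (1 : ℂ) else 0 := by
        intro i j k l
        have h := congrFun (congrFun hS1 (i, j)) (k, l)
        rw [hSdef] at h
        simpa [Matrix.sum_apply, Matrix.one_apply] using h
      have hoff : ∀ m' (i k : Fin d), i ≠ k → F m' i k = 0 := by
        intro m' i k hik
        have h := hentry i k k i
        rw [if_neg (by simp [Prod.ext_iff]; intro h'; exact absurd h' hik)] at h
        have h' : ∑ l, (Complex.normSq (F l i k) : ℂ) = 0 := by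
          rw [← h]
          refine Finset.sum_congr rfl fun l _ => ?_
          rw [← (hFh l).apply k i, Complex.star_def, Complex.mul_conj]
        have h'' : ∑ l, Complex.normSq (F l i k) = 0 := by exact_mod_cast h'
        have h3 := (Finset.sum_eq_zero_iff_of_nonneg
          (fun l _ => Complex.normSq_nonneg _)).mp h'' m' (Finset.mem_univ m')
        exact Complex.normSq_eq_zero.mp h3
      set r : Fin n → Fin d → ℝ := fun m' i => (F m' i i).re with hrdef
      have hdiagC : ∀ m' i, F m' i i = ((r m' i : ℝ) : ℂ) := by
        intro m' i
        have := (hFh m').apply i i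
        exact (Complex.conj_eq_iff_re.mp this).symm
      have hdiag : ∀ i j, ∑ m', r m' i * r m' j = 1 := by
        intro i j
        have h := hentry i j i j
        rw [if_pos rfl] at h
        have h' : ∑ m', ((r m' i * r m' j : ℝ) : ℂ) = 1 := by
          rw [← h]
          refine Finset.sum_congr rfl fun m' _ => ?_
          rw [hdiagC m' i, hdiagC m' j]
          push_cast
          ring
        exact_mod_cast h'
      have hreq : ∀ m' (i j : Fin d), r m' i = r m' j := by
        intro m' i j
        have hzero : ∑ m', (r m' i - r m' j) ^ 2 = 0 := by
          have e : ∑ m', (r m' i - r m' j) ^ 2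
              = ∑ m', r m' i * r m' i - 2 * ∑ m', r m' i * r m' j
                + ∑ m', r m' j * r m' j := by
            rw [Finset.mul_sum, ← Finset.sum_sub_distrib, ← Finset.sum_add_distrib]
            exact Finset.sum_congr rfl fun m' _ => by ring
          rw [e, hdiag i i, hdiag i j, hdiag j j]
          ring
        have h3 := (Finset.sum_eq_zero_iff_of_nonneg
          (fun m' _ => sq_nonneg _)).mp hzero m' (Finset.mem_univ m')
        have := sq_eq_zero_iff.mp h3
        linarith
      refine ⟨(r m i₀) ^ 2, sq_nonneg _, ?_⟩
      have hFm : F m = ((r m i₀ : ℝ) : ℂ) • 1 := by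
        ext i j
        by_cases hij : i = j
        · subst hij
          rw [hdiagC m i, hreq m i i₀]
          simp [Matrix.one_apply]
        · rw [hoff m i j hij]
          simp [Matrix.one_apply, hij]
      rw [← hFsq m, hFm, smul_mul_assoc, mul_smul_comm, one_mul, smul_smul]
      congr 1
      push_cast
      ring
  · -- scalars → S = 1
    intro h
    choose c hc0 hcE using h
    have hFc : ∀ l, F l = ((Real.sqrt (c l) : ℝ) : ℂ) • 1 := by
      intro l
      have hps : Matrix.PosSemidef
          (((Real.sqrt (c l) : ℝ) : ℂ) • (1 : Matrix (Fin d) (Fin d) ℂ)) := by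
        rw [smul_one_eq_diagonal]
        exact PosSemidef.diagonal fun i => Complex.zero_le_real.mpr (Real.sqrt_nonneg _)
      have hsq : (((Real.sqrt (c l) : ℝ) : ℂ) • (1 : Matrix (Fin d) (Fin d) ℂ)) ^ 2
          = E l := by
        rw [hcE l, sq, smul_mul_assoc, mul_smul_comm, one_mul, smul_smul]
        congr 1
        rw [← Complex.ofReal_mul, Real.mul_self_sqrt (hc0 l)]
      exact psd_sqrt_of_eq_smul_one (hE l) (c l) (hcE l)
    rcases isEmpty_or_nonempty (Fin d) with hd | hd
    · ext p q
      exact hd.elim p.1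
    · obtain ⟨i₀⟩ := hd
      have hcsum : ∑ l, c l = 1 := by
        have h := congrFun (congrFun hsum i₀) i₀
        rw [Matrix.sum_apply] at h
        simp_rw [fun l => congrFun (congrFun (hcE l) i₀) i₀] at h
        simp [Matrix.one_apply] at h
        exact_mod_cast h
      rw [hSdef]
      calc ∑ l, (F l) ⊗ₖ (F l)
          = ∑ l, ((c l : ℝ) : ℂ) • ((1 : Matrix (Fin d) (Fin d) ℂ) ⊗ₖ 1) := by
            refine Finset.sum_congr rfl fun l _ => ?_
            rw [hFc l, smul_kronecker, kronecker_smul, smul_smul]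
            congr 1
            rw [← Complex.ofReal_mul, Real.mul_self_sqrt (hc0 l)]
        _ = 1 := by
            rw [one_kronecker_one, ← Finset.sum_smul]
            have : (∑ l, ((c l : ℝ) : ℂ)) = 1 := by
              rw [← Complex.ofReal_sum, hcsum, Complex.ofReal_one]
            rw [this, one_smul]
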